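/- Let a and b be nonzero polynomials in R with equal total degree n, and let a_n and b_n denote their homogeneous components of degree n (their leading homogeneous parts). If a nonzero polynomial g ∈ R of total degree d satisfies a * σ(g) + b * g = 0, then the leading homogeneous part g_d of g satisfies a_n * σ(g_d) + b_n * g_d = 0. -/
import Mathlib


open MvPolynomial

private lemma sum_hc_range {F : Type*} [CommSemiring F] {τ : Type*}
    (p : MvPolynomial τ F) {m : ℕ} (hp : p.totalDegree ≤ m) :
    ∑ i ∈ Finset.range (m + 1), homogeneousComponent i p = p := by
  conv_rhs => rw [← sum_homogeneousComponent p]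
  exact (Finset.sum_subset (Finset.range_subset_range.mpr (Nat.succ_le_succ hp))
    (fun i _ hi => homogeneousComponent_eq_zero i p
      (by simp only [Finset.mem_range, not_lt] at hi; omega))).symm

private lemma hc_mul {F : Type*} [CommSemiring F] {τ : Type*}
    (p q : MvPolynomial τ F) {m k : ℕ}
    (hp : p.totalDegree ≤ m) (hq : q.totalDegree ≤ k) :
    homogeneousComponent (m + k) (p * q) =
      homogeneousComponent m p * homogeneousComponent k q := by
  conv_lhs => rw [← sum_hc_range p hp, ← sum_hc_range q hq, Finset.sum_mul_sum]
  rw [map_sum]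
  have key : ∀ i ∈ Finset.range (m + 1), ∀ j ∈ Finset.range (k + 1),
      homogeneousComponent (m + k) (homogeneousComponent i p * homogeneousComponent j q)
        = if i = m ∧ j = k then homogeneousComponent m p * homogeneousComponent k q
          else 0 := by
    intro i hi j hj
    rw [homogeneousComponent_of_mem ((mem_homogeneousSubmodule _ _).mpr
      ((homogeneousComponent_isHomogeneous i p).mul (homogeneousComponent_isHomogeneous j q)))]
    simp only [Finset.mem_range, Nat.lt_succ_iff] at hi hj
    by_cases h : i = m ∧ j = k
    · obtain ⟨rfl, rfl⟩ := h
      simp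
    · have hne : ¬(m + k = i + j) := by omega
      simp [hne, h]
  rw [Finset.sum_congr rfl (fun i hi => map_sum _ _ _),
      Finset.sum_congr rfl (fun i hi => Finset.sum_congr rfl (key i hi))]
  simp [Finset.sum_ite_eq', ite_and]

theorem leading_part_equation
    {F : Type*} [Field F] (u v : F) (hu : u ≠ 0)
    (σ : MvPolynomial (Fin 2) F →ₐ[F] MvPolynomial (Fin 2) F)
    (hσα : σ (X 0) = X 1)
    (hσβ : σ (X 1) = u • X 0 + v • X 1)
    (a b g : MvPolynomial (Fin 2) F) (ha : a ≠ 0) (hb : b ≠ 0) (hg : g ≠ 0)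
    (n : ℕ) (han : a.totalDegree = n) (hbn : b.totalDegree = n)
    (heq : a * σ g + b * g = 0) :
    homogeneousComponent n a * σ (homogeneousComponent g.totalDegree g) +
      homogeneousComponent n b * homogeneousComponent g.totalDegree g = 0 := by
  -- σ sends each variable to a homogeneous polynomial of degree 1
  have hvar : ∀ i : Fin 2, (σ (X i)).IsHomogeneous 1 := by
    intro i
    fin_cases i
    · show (σ (X 0)).IsHomogeneous 1
      rw [hσα]; exact isHomogeneous_X _ _
    · show (σ (X 1)).IsHomogeneous 1
      rw [hσβ]
      have h0 : (u • X 0 : MvPolynomial (Fin 2) F) = C u * X 0 := by rw [smul_eq_C_mul]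
      have h1 : (v • X 1 : MvPolynomial (Fin 2) F) = C v * X 1 := by rw [smul_eq_C_mul]
      rw [h0, h1]
      exact ((isHomogeneous_X _ _).C_mul u).add ((isHomogeneous_X _ _).C_mul v)
  -- σ preserves homogeneity of each degree
  have hσhom : ∀ (p : MvPolynomial (Fin 2) F) (k : ℕ), p.IsHomogeneous k →
      (σ p).IsHomogeneous k := by
    intro p k hp
    have := hp.aeval (fun i => σ (X i)) hvar
    rw [one_mul] at this
    convert this using 2
    exact (aeval_unique σ) ▸ rfl
  -- σ commutes with homogeneous components
  have hσcomp : ∀ (p : MvPolynomial (Fin 2) F) (k : ℕ),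
      homogeneousComponent k (σ p) = σ (homogeneousComponent k p) := by
    intro p k
    conv_lhs => rw [← sum_homogeneousComponent p]
    rw [map_sum, map_sum]
    rw [Finset.sum_congr rfl (fun i _ => homogeneousComponent_of_mem
      ((mem_homogeneousSubmodule _ _).mpr
        (hσhom _ i (homogeneousComponent_isHomogeneous i p))))]
    rw [Finset.sum_ite_eq]
    by_cases hk : k ∈ Finset.range (p.totalDegree + 1)
    · simp [hk]
    · simp only [hk, if_false]
      rw [homogeneousComponent_eq_zero k p
        (by simp only [Finset.mem_range, not_lt] at hk; omega), map_zero]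
  -- totalDegree (σ g) ≤ totalDegree g
  have hdeg : (σ g).totalDegree ≤ g.totalDegree := by
    conv_lhs => rw [← sum_homogeneousComponent g]
    rw [map_sum]
    refine (totalDegree_finset_sum _ _).trans ?_
    apply Finset.sup_le
    intro i hi
    simp only [Finset.mem_range, Nat.lt_succ_iff] at hi
    exact le_trans (IsHomogeneous.totalDegree_le
      (hσhom _ i (homogeneousComponent_isHomogeneous i g))) hi
  set d := g.totalDegree with hd
  have h1 := congrArg (homogeneousComponent (n + d)) heq
  rw [map_add, map_zero, hc_mul a (σ g) han.le hdeg, hc_mul b g hbn.le le_rfl,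
    hσcomp g d] at h1
  exact h1
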